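/- If X ≥ Y > 0 are strictly positive operators and s·I ≥ Y ≥ t·I for positive reals s ≥ t > 0, then ((s+t)²/(4st)) X² ≥ Y². -/

import Mathlib

noncomputable section

variable {H : Type*} [NormedAddCommGroup H] [InnerProductSpace ℂ H] [CompleteSpace H]

set_option maxHeartbeats 1000000 in
set_option synthInstance.maxHeartbeats 400000 in
/-- Kantorovich-type squaring inequality with bounds on the smaller operator. -/
theorem kantorovich_square_lower (X Y : H →L[ℂ] H) (hY : 0 ≤ Y) (hYinv : IsUnit Y)
    (hYX : Y ≤ X) (s t : ℝ) (ht : 0 < t) (hts : t ≤ s)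
    (hYs : Y ≤ s • (1 : H →L[ℂ] H)) (hYt : t • (1 : H →L[ℂ] H) ≤ Y) :
    Y ^ (2 : ℕ) ≤ ((s + t) ^ 2 / (4 * s * t)) • X ^ (2 : ℕ) := by
  have hs : (0 : ℝ) < s := ht.trans_le hts
  have hst : (0 : ℝ) < s * t := mul_pos hs ht
  set r : ℝ := Real.sqrt (s * t) with hr_def
  have hr : 0 < r := Real.sqrt_pos.mpr hst
  have hrr : r * r = s * t := Real.mul_self_sqrt hst.le
  set c : ℝ := (s + t) / (2 * r) with hc_def
  have hcr : c * r = (s + t) / 2 := by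
    rw [hc_def, div_mul_eq_mul_div, div_eq_div_iff (mul_pos two_pos hr).ne' two_ne_zero]
    ring
  have hcc : c * c = (s + t) ^ 2 / (4 * s * t) := by
    rw [hc_def, div_mul_div_comm, show 2 * r * (2 * r) = 4 * (r * r) by ring, hrr]
    ring
  have hYsa : IsSelfAdjoint Y := .of_nonneg hY
  have hXsa : IsSelfAdjoint X := by
    have h1 : IsSelfAdjoint (X - Y) := .of_nonneg (sub_nonneg.mpr hYX)
    simpa using h1.add hYsa
  -- spectrum of Y lies in [t, s]
  have hspec : ∀ x ∈ spectrum ℝ Y, t ≤ x ∧ x ≤ s := by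
    intro x hx
    have h1 : algebraMap ℝ (H →L[ℂ] H) t ≤ Y := by rwa [Algebra.algebraMap_eq_smul_one]
    have h2 : Y ≤ algebraMap ℝ (H →L[ℂ] H) s := by rwa [Algebra.algebraMap_eq_smul_one]
    exact ⟨(algebraMap_le_iff_le_spectrum (a := Y) hYsa).mp h1 x hx,
      (le_algebraMap_iff_spectrum_le (a := Y) hYsa).mp h2 x hx⟩
  -- step 1 : (s - Y)(Y - t) ≥ 0
  have key1 : 0 ≤ (s • (1 : H →L[ℂ] H) - Y) * (Y - t • 1) := by
    have h0 : 0 ≤ cfc (fun x : ℝ => (s - x) * (x - t)) Y :=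
      cfc_nonneg fun x hx => mul_nonneg (sub_nonneg.mpr (hspec x hx).2)
        (sub_nonneg.mpr (hspec x hx).1)
    have heq : cfc (fun x : ℝ => (s - x) * (x - t)) Y
        = (s • (1 : H →L[ℂ] H) - Y) * (Y - t • 1) := by
      rw [cfc_mul _ _ Y (by fun_prop) (by fun_prop),
        cfc_sub _ _ Y (by fun_prop) (by fun_prop),
        cfc_sub _ _ Y (by fun_prop) (by fun_prop),
        cfc_const s Y, cfc_const t Y, cfc_id' ℝ Y, Algebra.algebraMap_eq_smul_one,
        Algebra.algebraMap_eq_smul_one]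
    rwa [heq] at h0
  have hY2 : Y * Y ≤ (s + t) • Y - (s * t) • 1 := by
    have hexp : (s • (1 : H →L[ℂ] H) - Y) * (Y - t • 1)
        = ((s + t) • Y - (s * t) • 1) - Y * Y := by
      simp only [sub_mul, mul_sub, smul_mul_assoc, mul_smul_comm, one_mul, mul_one]
      module
    rw [hexp] at key1
    exact sub_nonneg.mp key1
  -- step 2 : (s+t)X - st ≤ c² X²
  have hA : IsSelfAdjoint (c • X - r • (1 : H →L[ℂ] H)) :=
    (IsSelfAdjoint.smul (star_trivial c) hXsa).sub
      (IsSelfAdjoint.smul (star_trivial r) (IsSelfAdjoint.one (H →L[ℂ] H)))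
  have h0 : 0 ≤ (c • X - r • (1 : H →L[ℂ] H)) * (c • X - r • 1) := by
    simpa [hA.star_eq] using star_mul_self_nonneg (c • X - r • (1 : H →L[ℂ] H))
  have hexp2 : (c • X - r • (1 : H →L[ℂ] H)) * (c • X - r • 1)
      = (c * c) • (X * X) - ((s + t) • X - (s * t) • 1) := by
    have h2cr : (2 : ℝ) * (c * r) = s + t := by rw [hcr]; ring
    calc (c • X - r • (1 : H →L[ℂ] H)) * (c • X - r • 1)
        = (c * c) • (X * X) - ((2 * (c * r)) • X - (r * r) • 1) := by
          simp only [sub_mul, mul_sub, smul_mul_assoc, mul_smul_comm, one_mul, mul_one]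
          module
      _ = _ := by rw [h2cr, hrr]
  rw [hexp2] at h0
  have key2 : (s + t) • X - (s * t) • 1 ≤ (c * c) • (X * X) := sub_nonneg.mp h0
  have hmid : (s + t) • Y - (s * t) • (1 : H →L[ℂ] H) ≤ (s + t) • X - (s * t) • 1 :=
    sub_le_sub_right (smul_le_smul_of_nonneg_left hYX (by positivity)) _
  calc Y ^ (2 : ℕ) = Y * Y := sq Y
    _ ≤ (s + t) • Y - (s * t) • 1 := hY2
    _ ≤ (s + t) • X - (s * t) • 1 := hmid
    _ ≤ (c * c) • (X * X) := key2
    _ = ((s + t) ^ 2 / (4 * s * t)) • X ^ (2 : ℕ) := by rw [hcc, ← sq X]
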